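/- The canonical parameterization of left-gauge-fixed tangent vectors makes the pullback metric the identity: let A be a full-rank MPS parameter, and for each n let V^s_L(n) (s = 1,…,q_n) be complex D_{n−1}×K_n matrices satisfying Σ_s A^s(n)† l(n−1)^{1/2} V^s_L(n) = 0 and Σ_s V^s_L(n)† V^s_L(n) = 1_{K_n}. For families X = (X(n)) and Y = (Y(n)) of complex K_n×D_n matrices define B^s(n) = l(n−1)^{-1/2}·V^s_L(n)·X(n)·r(n)^{-1/2} and C^s(n) = l(n−1)^{-1/2}·V^s_L(n)·Y(n)·r(n)^{-1/2}. Then (i) B satisfies the left gauge-fixing conditions Σ_s A^s(n)† l(n−1) B^s(n) = 0 for all n = 1,…,N, and (ii) ⟨Φ[B; A], Φ[C; A]⟩ = Σ_{n=1}^N tr[X(n)† Y(n)]. -/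

import Mathlib

open Matrix
open scoped ComplexOrder

noncomputable section

/-- The positive semidefinite square root of a positive semidefinite matrix, as defined in
Mathlib of December 2024 (removed from Mathlib since). -/
def Matrix.PosSemidef.sqrt {𝕜 : Type*} [RCLike 𝕜] {n : Type*} [Fintype n] [DecidableEq n]
    {A : Matrix n n 𝕜} (hA : A.PosSemidef) : Matrix n n 𝕜 :=
  hA.1.eigenvectorUnitary.1 * diagonal ((↑) ∘ Real.sqrt ∘ hA.1.eigenvalues) *
    (star hA.1.eigenvectorUnitary : Matrix n n 𝕜)

namespace MPS

variable {N : ℕ} {q : Fin N → ℕ} {D : ℕ → ℕ}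

/-- The left virtual density matrices: `l 0 = 1`,
`l (n+1) = Σ_s A^s(n)† l(n) A^s(n)`. -/
def lMat (A : (n : Fin N) → Fin (q n) → Matrix (Fin (D n.val)) (Fin (D (n.val + 1))) ℂ) :
    (k : ℕ) → k ≤ N → Matrix (Fin (D k)) (Fin (D k)) ℂ
  | 0, _ => 1
  | k + 1, h => ∑ s : Fin (q ⟨k, h⟩),
      (A ⟨k, h⟩ s)ᴴ * lMat A k (Nat.le_of_succ_le h) * A ⟨k, h⟩ s

/-- Auxiliary downward recursion for the right virtual density matrices:
`rAux j = r (N - j)`. -/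
def rAux (A : (n : Fin N) → Fin (q n) → Matrix (Fin (D n.val)) (Fin (D (n.val + 1))) ℂ) :
    (j : ℕ) → j ≤ N → Matrix (Fin (D (N - j))) (Fin (D (N - j))) ℂ
  | 0, _ => 1
  | j + 1, h => ∑ s : Fin (q ⟨N - (j + 1), by omega⟩),
      A ⟨N - (j + 1), by omega⟩ s *
        ((rAux A j (Nat.le_of_succ_le h)).submatrix
          (Fin.cast (congrArg D (by omega : N - (j + 1) + 1 = N - j)))
          (Fin.cast (congrArg D (by omega : N - (j + 1) + 1 = N - j)))) *
      (A ⟨N - (j + 1), by omega⟩ s)ᴴ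

/-- The right virtual density matrices: `r N = 1`,
`r (n-1) = Σ_s A^s(n) r(n) A^s(n)†`. -/
def rMat (A : (n : Fin N) → Fin (q n) → Matrix (Fin (D n.val)) (Fin (D (n.val + 1))) ℂ)
    (n : ℕ) (h : n ≤ N) : Matrix (Fin (D n)) (Fin (D n)) ℂ :=
  (rAux A (N - n) (Nat.sub_le N n)).submatrix
    (Fin.cast (congrArg D (by omega : n = N - (N - n))))
    (Fin.cast (congrArg D (by omega : n = N - (N - n))))

/-- An MPS parameter is full rank if all its virtual density matrices are positive
definite. -/
def FullRank (A : (n : Fin N) → Fin (q n) → Matrix (Fin (D n.val)) (Fin (D (n.val + 1))) ℂ) :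
    Prop :=
  ∀ (k : ℕ) (h : k ≤ N), (lMat A k h).PosDef ∧ (rMat A k h).PosDef

end MPS

namespace MPS

variable {N : ℕ} {q : Fin N → ℕ} {D : ℕ → ℕ}

/-- The partial ordered product `A^{s_0}(0) ⋯ A^{s_{k-1}}(k-1)`. -/
def prodAux (A : (n : Fin N) → Fin (q n) → Matrix (Fin (D n.val)) (Fin (D (n.val + 1))) ℂ)
    (s : (n : Fin N) → Fin (q n)) : (k : ℕ) → k ≤ N → Matrix (Fin (D 0)) (Fin (D k)) ℂ
  | 0, _ => 1
  | k + 1, h => prodAux A s k (Nat.le_of_succ_le h) * A ⟨k, h⟩ (s ⟨k, h⟩)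

/-- The matrix product state `Ψ[A]`, as the family of its coefficients
`tr[A^{s_1}(1) ⋯ A^{s_N}(N)]`. -/
def psi (hD : D N = D 0)
    (A : (n : Fin N) → Fin (q n) → Matrix (Fin (D n.val)) (Fin (D (n.val + 1))) ℂ) :
    ((n : Fin N) → Fin (q n)) → ℂ :=
  fun s => Matrix.trace ((prodAux A s N le_rfl).submatrix id (Fin.cast hD.symm))

/-- The MPS tangent vector `Φ[B; A]`, whose coefficient on the basis vector indexed by
`s` is `Σ_{n=1}^N tr[A^{s_1}(1) ⋯ B^{s_n}(n) ⋯ A^{s_N}(N)]`. -/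
def phi (hD : D N = D 0)
    (A B : (n : Fin N) → Fin (q n) → Matrix (Fin (D n.val)) (Fin (D (n.val + 1))) ℂ) :
    ((n : Fin N) → Fin (q n)) → ℂ :=
  fun s => ∑ n : Fin N, psi hD (Function.update A n (B n)) s

end MPS

theorem Matrix.PosSemidef.sqrt_mul_self {𝕜 : Type*} [RCLike 𝕜] {n : Type*} [Fintype n]
    [DecidableEq n] {A : Matrix n n 𝕜} (hA : A.PosSemidef) : hA.sqrt * hA.sqrt = A := by
  have hU : (star hA.1.eigenvectorUnitary : Matrix n n 𝕜) * hA.1.eigenvectorUnitary = 1 := by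
    simp
  conv_rhs => rw [hA.1.spectral_theorem, Unitary.conjStarAlgAut_apply]
  simp only [Matrix.PosSemidef.sqrt, Matrix.mul_assoc]
  rw [← Matrix.mul_assoc (star _ : Matrix n n 𝕜), hU, Matrix.one_mul,
    ← Matrix.mul_assoc (diagonal _), diagonal_mul_diagonal]
  congr 3
  funext i
  simp only [Function.comp_apply, ← RCLike.ofReal_mul, Real.mul_self_sqrt (hA.eigenvalues_nonneg i)]

theorem Matrix.PosSemidef.isHermitian_sqrt' {𝕜 : Type*} [RCLike 𝕜] {n : Type*} [Fintype n]
    [DecidableEq n] {A : Matrix n n 𝕜} (hA : A.PosSemidef) : hA.sqrt.IsHermitian := by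
  simp only [Matrix.IsHermitian, Matrix.PosSemidef.sqrt, Matrix.conjTranspose_mul,
    Matrix.diagonal_conjTranspose, Matrix.mul_assoc]
  rw [Matrix.star_eq_conjTranspose, Matrix.conjTranspose_conjTranspose]
  congr 3
  funext i
  simp

namespace MPS

variable {N : ℕ} {q : Fin N → ℕ} {D : ℕ → ℕ}

/-! ### Auxiliary machinery -/

/-- The mixed left environment of two MPS parameter families. -/
def lE (M M' : (n : Fin N) → Fin (q n) → Matrix (Fin (D n.val)) (Fin (D (n.val + 1))) ℂ) :
    (k : ℕ) → k ≤ N → Matrix (Fin (D k)) (Fin (D k)) ℂ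
  | 0, _ => 1
  | k + 1, h => ∑ s : Fin (q ⟨k, h⟩),
      (M ⟨k, h⟩ s)ᴴ * lE M M' k (Nat.le_of_succ_le h) * M' ⟨k, h⟩ s

lemma fin_cast_eq_id {a : ℕ} (h : a = a) : (Fin.cast h : Fin a → Fin a) = id :=
  funext fun i => Fin.ext rfl

lemma trace_submatrix_cast_mul {d d' : ℕ} (e : d = d') (X : Matrix (Fin d') (Fin d') ℂ)
    (Y : Matrix (Fin d) (Fin d) ℂ) :
    trace (X.submatrix (Fin.cast e) (Fin.cast e) * Y) =
    trace (X * Y.submatrix (Fin.cast e.symm) (Fin.cast e.symm)) := by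
  subst e
  rw [fin_cast_eq_id, Matrix.submatrix_id_id, Matrix.submatrix_id_id]

lemma eq_submatrix_cast {a b : ℕ} (e : a = b)
    (F : (k : ℕ) → k ≤ N → Matrix (Fin (D k)) (Fin (D k)) ℂ) (ha : a ≤ N) (hb : b ≤ N) :
    F a ha = (F b hb).submatrix (Fin.cast (congrArg D e)) (Fin.cast (congrArg D e)) := by
  subst e
  rw [fin_cast_eq_id, Matrix.submatrix_id_id]

variable (A M M' : (n : Fin N) → Fin (q n) → Matrix (Fin (D n.val)) (Fin (D (n.val + 1))) ℂ)

lemma lE_self : ∀ (k : ℕ) (h : k ≤ N), lE A A k h = lMat A k h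
  | 0, _ => rfl
  | k + 1, h => by
    simp only [lE, lMat, lE_self k (Nat.le_of_succ_le h)]

lemma lE_eq_lMat : ∀ (k : ℕ) (h : k ≤ N),
    (∀ i : Fin N, i.val < k → M i = A i) → (∀ i : Fin N, i.val < k → M' i = A i) →
    lE M M' k h = lMat A k h
  | 0, _, _, _ => rfl
  | k + 1, h, hM, hM' => by
    simp only [lE, lMat,
      lE_eq_lMat k (Nat.le_of_succ_le h) (fun i hi => hM i (by omega))
        (fun i hi => hM' i (by omega)),
      hM ⟨k, h⟩ (by simp), hM' ⟨k, h⟩ (by simp)]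

lemma trace_lE_zero (k0 : ℕ) (hk0 : k0 ≤ N) (hz : lE M M' k0 hk0 = 0) :
    trace (lE M M' N le_rfl) = 0 := by
  suffices H : ∀ (k : ℕ) (h1 : k0 ≤ k) (h2 : k ≤ N), lE M M' k h2 = 0 by
    rw [H N hk0 le_rfl]; simp
  intro k h1
  induction k, h1 using Nat.le_induction with
  | base => intro h2; exact hz
  | succ k hk ih =>
    intro h2
    simp only [lE, ih (Nat.le_of_succ_le h2), Matrix.mul_zero, Matrix.zero_mul,
      Finset.sum_const_zero]

lemma trace_lE_eq_rAux :
    ∀ (j : ℕ) (hj : j ≤ N),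
      (∀ i : Fin N, N - j ≤ i.val → M i = A i) → (∀ i : Fin N, N - j ≤ i.val → M' i = A i) →
      trace (lE M M' N le_rfl) = trace (lE M M' (N - j) (Nat.sub_le N j) * rAux A j hj)
  | 0, hj, _, _ => by simp [rAux]
  | j + 1, hj, hM, hM' => by
    rw [trace_lE_eq_rAux j (Nat.le_of_succ_le hj) (fun i hi => hM i (by omega))
      (fun i hi => hM' i (by omega))]
    have e : N - j = (N - (j + 1)) + 1 := by omega
    rw [eq_submatrix_cast e (lE M M') (Nat.sub_le N j) (by omega),
      trace_submatrix_cast_mul]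
    simp only [lE, rAux]
    rw [hM ⟨N - (j + 1), by omega⟩ (by simp), hM' ⟨N - (j + 1), by omega⟩ (by simp)]
    rw [Finset.sum_mul, Matrix.trace_sum, Finset.mul_sum, Matrix.trace_sum]
    refine Finset.sum_congr rfl fun s _ => ?_
    simp only [Matrix.mul_assoc]
    rw [Matrix.trace_mul_comm]
    simp only [Matrix.mul_assoc]

lemma trace_lE_eq_rMat (k0 : ℕ) (hk0 : k0 ≤ N)
    (hM : ∀ i : Fin N, k0 ≤ i.val → M i = A i) (hM' : ∀ i : Fin N, k0 ≤ i.val → M' i = A i) :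
    trace (lE M M' N le_rfl) = trace (lE M M' k0 hk0 * rMat A k0 hk0) := by
  rw [trace_lE_eq_rAux A M M' (N - k0) (Nat.sub_le N k0) (fun i hi => hM i (by omega))
    (fun i hi => hM' i (by omega))]
  rw [eq_submatrix_cast (show N - (N - k0) = k0 by omega) (lE M M') (Nat.sub_le N (N - k0)) hk0,
    trace_submatrix_cast_mul]
  rfl

lemma prodAux_congr (s s' : (n : Fin N) → Fin (q n)) :
    ∀ (k : ℕ) (h : k ≤ N), (∀ i : Fin N, i.val < k → s i = s' i) →
      prodAux M s k h = prodAux M s' k h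
  | 0, _, _ => rfl
  | k + 1, h, hs => by
    simp only [prodAux, prodAux_congr s s' k (Nat.le_of_succ_le h) (fun i hi => hs i (by omega)),
      hs ⟨k, h⟩ (by simp)]

lemma sum_prodAux (k : ℕ) (h : k ≤ N) :
    ∑ s : (n : Fin N) → Fin (q n), (prodAux M s k h)ᴴ * prodAux M' s k h
      = (∏ n : Fin N, if k ≤ n.val then (q n : ℂ) else 1) • lE M M' k h := by
  induction k with
  | zero =>
    simp only [prodAux, lE, Matrix.conjTranspose_one, Matrix.one_mul]
    rw [Finset.sum_const, Finset.card_univ, Fintype.card_pi,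
      ← Nat.cast_smul_eq_nsmul ℂ, Nat.cast_prod]
    simp [Nat.zero_le]
  | succ k ih =>
    have h' := Nat.le_of_succ_le h
    by_cases hq : q ⟨k, h⟩ = 0
    · haveI hE : IsEmpty (Fin (q ⟨k, h⟩)) := by rw [hq]; infer_instance
      haveI : IsEmpty ((n : Fin N) → Fin (q n)) := by
        rw [isEmpty_pi]; exact ⟨⟨k, h⟩, hE⟩
      have h1 : (Finset.univ : Finset ((n : Fin N) → Fin (q n))) = ∅ := Finset.univ_eq_empty
      have h2 : (Finset.univ : Finset (Fin (q ⟨k, h⟩))) = ∅ := Finset.univ_eq_empty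
      rw [h1, Finset.sum_empty]
      simp only [lE]
      rw [h2, Finset.sum_empty, smul_zero]
    · have hpos : 0 < q ⟨k, h⟩ := Nat.pos_of_ne_zero hq
      have hq' : ((q ⟨k, h⟩ : ℂ)) ≠ 0 := Nat.cast_ne_zero.2 hq
      set e := Equiv.piSplitAt (⟨k, h⟩ : Fin N) (fun n => Fin (q n)) with he
      have hval : ∀ (a : Fin (q ⟨k, h⟩)) (t : (j : {j // j ≠ (⟨k, h⟩ : Fin N)}) → Fin (q j)),
          e.symm (a, t) ⟨k, h⟩ = a := by
        intro a t; simp [he, Equiv.piSplitAt]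
      have hoth : ∀ (a : Fin (q ⟨k, h⟩)) (t : (j : {j // j ≠ (⟨k, h⟩ : Fin N)}) → Fin (q j))
          (jj : Fin N) (hjj : jj ≠ ⟨k, h⟩), e.symm (a, t) jj = t ⟨jj, hjj⟩ := by
        intro a t jj hjj; simp [he, Equiv.piSplitAt, hjj]
      have hP : ∀ (MM : (n : Fin N) → Fin (q n) → Matrix (Fin (D n.val)) (Fin (D (n.val + 1))) ℂ)
          (a : Fin (q ⟨k, h⟩)) (t : (j : {j // j ≠ (⟨k, h⟩ : Fin N)}) → Fin (q j)),
          prodAux MM (e.symm (a, t)) k h' = prodAux MM (e.symm (⟨0, hpos⟩, t)) k h' := by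
        intro MM a t
        apply prodAux_congr
        intro i hi
        have hne : i ≠ ⟨k, h⟩ := by
          intro hh
          rw [hh] at hi
          exact absurd hi (by simp)
        rw [hoth a t i hne, hoth ⟨0, hpos⟩ t i hne]
      have hck : (∏ n : Fin N, if k ≤ n.val then (q n : ℂ) else 1)
          = (q ⟨k, h⟩ : ℂ) * ∏ n : Fin N, if k + 1 ≤ n.val then (q n : ℂ) else 1 := by
        rw [← Finset.mul_prod_erase Finset.univ
            (fun n : Fin N => if k ≤ n.val then (q n : ℂ) else 1) (Finset.mem_univ ⟨k, h⟩),
          ← Finset.mul_prod_erase Finset.univ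
            (fun n : Fin N => if k + 1 ≤ n.val then (q n : ℂ) else 1) (Finset.mem_univ ⟨k, h⟩)]
        simp only [if_pos (le_refl k), if_neg (by omega : ¬ k + 1 ≤ k), one_mul, ← mul_assoc]
        congr 1
        refine Finset.prod_congr rfl fun n hn => ?_
        have hne : n.val ≠ k := fun hh => (Finset.mem_erase.1 hn).1 (Fin.ext hh)
        by_cases hkn : k ≤ n.val
        · rw [if_pos hkn, if_pos (by omega)]
        · rw [if_neg hkn, if_neg (by omega)]
      have h1 : ∑ s : (n : Fin N) → Fin (q n), (prodAux M s k h')ᴴ * prodAux M' s k h'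
          = (q ⟨k, h⟩ : ℕ) • ∑ t : (j : {j // j ≠ (⟨k, h⟩ : Fin N)}) → Fin (q j),
              (prodAux M (e.symm (⟨0, hpos⟩, t)) k h')ᴴ *
                prodAux M' (e.symm (⟨0, hpos⟩, t)) k h' := by
        rw [← Equiv.sum_comp e.symm
          (fun s => (prodAux M s k h')ᴴ * prodAux M' s k h'), Fintype.sum_prod_type]
        rw [Finset.sum_congr rfl fun a _ => Finset.sum_congr rfl fun t _ => by
          rw [hP M a t, hP M' a t]]
        rw [Finset.sum_const, Finset.card_univ, Fintype.card_fin]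
      have key : ∑ t : (j : {j // j ≠ (⟨k, h⟩ : Fin N)}) → Fin (q j),
          (prodAux M (e.symm (⟨0, hpos⟩, t)) k h')ᴴ * prodAux M' (e.symm (⟨0, hpos⟩, t)) k h'
          = (∏ n : Fin N, if k + 1 ≤ n.val then (q n : ℂ) else 1) • lE M M' k h' := by
        have h2 := ih h'
        rw [h1, hck, ← smul_smul, ← Nat.cast_smul_eq_nsmul ℂ] at h2
        have := congrArg (fun Z => (q ⟨k, h⟩ : ℂ)⁻¹ • Z) h2
        simpa [inv_smul_smul₀ hq'] using this
      rw [← Equiv.sum_comp e.symm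
        (fun s => (prodAux M s (k + 1) h)ᴴ * prodAux M' s (k + 1) h), Fintype.sum_prod_type]
      simp only [prodAux, hval, Matrix.conjTranspose_mul]
      rw [Finset.sum_congr rfl fun a _ => Finset.sum_congr rfl fun t _ => by
        rw [hP M a t, hP M' a t]]
      have hre : ∀ a : Fin (q ⟨k, h⟩),
          ∑ t : (j : {j // j ≠ (⟨k, h⟩ : Fin N)}) → Fin (q j),
            (M ⟨k, h⟩ a)ᴴ * (prodAux M (e.symm (⟨0, hpos⟩, t)) k h')ᴴ *
              (prodAux M' (e.symm (⟨0, hpos⟩, t)) k h' * M' ⟨k, h⟩ a)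
          = (∏ n : Fin N, if k + 1 ≤ n.val then (q n : ℂ) else 1) •
              ((M ⟨k, h⟩ a)ᴴ * lE M M' k h' * M' ⟨k, h⟩ a) := by
        intro a
        have : ∀ t : (j : {j // j ≠ (⟨k, h⟩ : Fin N)}) → Fin (q j),
            (M ⟨k, h⟩ a)ᴴ * (prodAux M (e.symm (⟨0, hpos⟩, t)) k h')ᴴ *
              (prodAux M' (e.symm (⟨0, hpos⟩, t)) k h' * M' ⟨k, h⟩ a)
            = (M ⟨k, h⟩ a)ᴴ * ((prodAux M (e.symm (⟨0, hpos⟩, t)) k h')ᴴ *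
                prodAux M' (e.symm (⟨0, hpos⟩, t)) k h') * M' ⟨k, h⟩ a := by
          intro t; simp only [Matrix.mul_assoc]
        rw [Finset.sum_congr rfl fun t _ => this t, ← Matrix.sum_mul, ← Matrix.mul_sum, key]
        rw [Matrix.mul_smul, Matrix.smul_mul]
      rw [Finset.sum_congr rfl fun a _ => hre a, ← Finset.smul_sum]
      congr 1

lemma conj_trace_mul (h0 : D 0 = 1) (hN : D N = 1) (hD : D N = D 0)
    (P P' : Matrix (Fin (D 0)) (Fin (D N)) ℂ) :
    (starRingEnd ℂ) (trace (P.submatrix id (Fin.cast hD.symm))) *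
      trace (P'.submatrix id (Fin.cast hD.symm)) = trace (Pᴴ * P') := by
  have hs0 : ∀ f : Fin (D 0) → ℂ, ∑ i, f i = f ⟨0, by omega⟩ := by
    intro f
    refine Finset.sum_eq_single _ (fun b _ hb => absurd (Fin.ext ?_) hb)
      (fun hb => absurd (Finset.mem_univ _) hb)
    have := b.isLt; omega
  have hsN : ∀ f : Fin (D N) → ℂ, ∑ i, f i = f ⟨0, by omega⟩ := by
    intro f
    refine Finset.sum_eq_single _ (fun b _ hb => absurd (Fin.ext ?_) hb)
      (fun hb => absurd (Finset.mem_univ _) hb)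
    have := b.isLt; omega
  simp only [Matrix.trace, Matrix.diag, Matrix.submatrix_apply, Matrix.mul_apply,
    Matrix.conjTranspose_apply, id_eq]
  rw [hs0, hs0, hsN, hs0]
  rfl

lemma overlap_eq_trace_lE (h0 : D 0 = 1) (hN : D N = 1) (hD : D N = D 0) :
    ∑ s : (n : Fin N) → Fin (q n), (starRingEnd ℂ) (psi hD M s) * psi hD M' s
      = trace (lE M M' N le_rfl) := by
  have hterm : ∀ s : (n : Fin N) → Fin (q n), (starRingEnd ℂ) (psi hD M s) * psi hD M' s
      = trace ((prodAux M s N le_rfl)ᴴ * prodAux M' s N le_rfl) := fun s =>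
    conj_trace_mul h0 hN hD _ _
  rw [Finset.sum_congr rfl fun s _ => hterm s, ← Matrix.trace_sum, sum_prodAux M M' N le_rfl]
  have hc : (∏ n : Fin N, if N ≤ n.val then (q n : ℂ) else 1) = 1 :=
    Finset.prod_eq_one fun n _ => if_neg (by have := n.isLt; omega)
  rw [hc, one_smul]

lemma sqrt_det_isUnit {d : ℕ} {W : Matrix (Fin d) (Fin d) ℂ} (hW : W.PosDef) :
    IsUnit (hW.posSemidef.sqrt).det := by
  have h1 : (0 : ℂ) < W.det := hW.det_pos
  have h2 : (hW.posSemidef.sqrt).det * (hW.posSemidef.sqrt).det = W.det := by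
    rw [← Matrix.det_mul, hW.posSemidef.sqrt_mul_self]
  refine isUnit_iff_ne_zero.2 fun hz => ?_
  rw [hz, mul_zero] at h2
  exact (ne_of_gt h1) h2.symm

lemma sqrt_inv_conjTranspose {d : ℕ} {W : Matrix (Fin d) (Fin d) ℂ} (hW : W.PosDef) :
    ((hW.posSemidef.sqrt)⁻¹)ᴴ = (hW.posSemidef.sqrt)⁻¹ := by
  rw [Matrix.conjTranspose_nonsing_inv, hW.posSemidef.isHermitian_sqrt']

end MPS

/-- **The canonical parameterization of left-gauge-fixed tangent vectors makes the
pullback metric the identity:** with `B^s(n) = l(n−1)^{-1/2} V^s_L(n) X(n) r(n)^{-1/2}`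
(and similarly `C` from `Y`), (i) `B` satisfies the left gauge-fixing conditions, and
(ii) `⟨Φ[B; A], Φ[C; A]⟩ = Σ_{n=1}^N tr[X(n)† Y(n)]`. -/
theorem mps_canonical_parameterization (N : ℕ) (q : Fin N → ℕ) (D : ℕ → ℕ)
    (h0 : D 0 = 1) (hN : D N = 1)
    (A : (n : Fin N) → Fin (q n) → Matrix (Fin (D n.val)) (Fin (D (n.val + 1))) ℂ)
    (hl : ∀ (k : ℕ) (h : k ≤ N), (MPS.lMat A k h).PosDef)
    (hr : ∀ (k : ℕ) (h : k ≤ N), (MPS.rMat A k h).PosDef)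
    (K : Fin N → ℕ)
    (V : (n : Fin N) → Fin (q n) → Matrix (Fin (D n.val)) (Fin (K n)) ℂ)
    (hV1 : ∀ n : Fin N,
      ∑ s : Fin (q n), (A n s)ᴴ * (hl n.val n.isLt.le).posSemidef.sqrt * V n s = 0)
    (hV2 : ∀ n : Fin N, ∑ s : Fin (q n), (V n s)ᴴ * V n s = 1)
    (X Y : (n : Fin N) → Matrix (Fin (K n)) (Fin (D (n.val + 1))) ℂ) :
    (∀ n : Fin N,
      ∑ s : Fin (q n),
        (A n s)ᴴ * MPS.lMat A n.val n.isLt.le *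
          (((hl n.val n.isLt.le).posSemidef.sqrt)⁻¹ * V n s * X n *
            ((hr (n.val + 1) n.isLt).posSemidef.sqrt)⁻¹) = 0) ∧
    ∑ s : (n : Fin N) → Fin (q n),
        (starRingEnd ℂ)
            (MPS.phi (hN.trans h0.symm) A
              (fun n t => ((hl n.val n.isLt.le).posSemidef.sqrt)⁻¹ * V n t * X n *
                ((hr (n.val + 1) n.isLt).posSemidef.sqrt)⁻¹) s) *
          MPS.phi (hN.trans h0.symm) A
            (fun n t => ((hl n.val n.isLt.le).posSemidef.sqrt)⁻¹ * V n t * Y n *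
              ((hr (n.val + 1) n.isLt).posSemidef.sqrt)⁻¹) s
      = ∑ n : Fin N, Matrix.trace ((X n)ᴴ * Y n) := by
  have hgauge : ∀ (Z : (n : Fin N) → Matrix (Fin (K n)) (Fin (D (n.val + 1))) ℂ) (n : Fin N),
      ∑ s : Fin (q n), (A n s)ᴴ * MPS.lMat A n.val n.isLt.le *
          (((hl n.val n.isLt.le).posSemidef.sqrt)⁻¹ * V n s * Z n *
            ((hr (n.val + 1) n.isLt).posSemidef.sqrt)⁻¹) = 0 := by
    intro Z n
    set L := (hl n.val n.isLt.le).posSemidef.sqrt with hLdef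
    have hLL : L * L = MPS.lMat A n.val n.isLt.le := (hl n.val n.isLt.le).posSemidef.sqrt_mul_self
    have hdet : IsUnit L.det := MPS.sqrt_det_isUnit (hl n.val n.isLt.le)
    have hstep : ∀ s : Fin (q n), (A n s)ᴴ * MPS.lMat A n.val n.isLt.le *
        (L⁻¹ * V n s * Z n * ((hr (n.val + 1) n.isLt).posSemidef.sqrt)⁻¹)
        = (A n s)ᴴ * L * V n s *
            (Z n * ((hr (n.val + 1) n.isLt).posSemidef.sqrt)⁻¹) := by
      intro s
      rw [← hLL]
      simp only [Matrix.mul_assoc]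
      rw [Matrix.mul_nonsing_inv_cancel_left _ _ hdet]
    rw [Finset.sum_congr rfl fun s _ => hstep s, ← Matrix.sum_mul]
    rw [hLdef, hV1 n, Matrix.zero_mul]
  refine ⟨hgauge X, ?_⟩
  have hgB := hgauge X
  have hgC := hgauge Y
  have hdiag : ∀ n : Fin N, Matrix.trace (MPS.lE
      (Function.update A n (fun t => ((hl n.val n.isLt.le).posSemidef.sqrt)⁻¹ * V n t * X n *
        ((hr (n.val + 1) n.isLt).posSemidef.sqrt)⁻¹))
      (Function.update A n (fun t => ((hl n.val n.isLt.le).posSemidef.sqrt)⁻¹ * V n t * Y n *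
        ((hr (n.val + 1) n.isLt).posSemidef.sqrt)⁻¹)) N le_rfl)
      = Matrix.trace ((X n)ᴴ * Y n) := by
    intro n
    rw [MPS.trace_lE_eq_rMat A _ _ (n.val + 1) n.isLt
      (fun i hi => Function.update_of_ne (Fin.ne_of_val_ne (by omega)) _ _)
      (fun i hi => Function.update_of_ne (Fin.ne_of_val_ne (by omega)) _ _)]
    simp only [MPS.lE, Fin.eta, Function.update_self]
    rw [MPS.lE_eq_lMat A _ _ n.val (Nat.le_of_succ_le n.isLt)
      (fun i hi => Function.update_of_ne (Fin.ne_of_val_ne (by omega)) _ _)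
      (fun i hi => Function.update_of_ne (Fin.ne_of_val_ne (by omega)) _ _)]
    set L := (hl n.val n.isLt.le).posSemidef.sqrt with hLdef
    set R := (hr (n.val + 1) n.isLt).posSemidef.sqrt with hRdef
    have hLL : L * L = MPS.lMat A n.val n.isLt.le :=
      (hl n.val n.isLt.le).posSemidef.sqrt_mul_self
    have hRR : R * R = MPS.rMat A (n.val + 1) n.isLt :=
      (hr (n.val + 1) n.isLt).posSemidef.sqrt_mul_self
    have hLdet : IsUnit L.det := MPS.sqrt_det_isUnit (hl n.val n.isLt.le)
    have hRdet : IsUnit R.det := MPS.sqrt_det_isUnit (hr (n.val + 1) n.isLt)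
    have hLiH : (L⁻¹)ᴴ = L⁻¹ := MPS.sqrt_inv_conjTranspose (hl n.val n.isLt.le)
    have hRiH : (R⁻¹)ᴴ = R⁻¹ := MPS.sqrt_inv_conjTranspose (hr (n.val + 1) n.isLt)
    have hterm : ∀ s : Fin (q n),
        (L⁻¹ * V n s * X n * R⁻¹)ᴴ * MPS.lMat A n.val (Nat.le_of_succ_le n.isLt) *
          (L⁻¹ * V n s * Y n * R⁻¹)
        = (R⁻¹ * (X n)ᴴ) * (((V n s)ᴴ * V n s) * (Y n * R⁻¹)) := by
      intro s
      rw [← hLL]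
      simp only [Matrix.conjTranspose_mul, hLiH, hRiH, Matrix.mul_assoc]
      rw [Matrix.mul_nonsing_inv_cancel_left _ _ hLdet,
        Matrix.nonsing_inv_mul_cancel_left _ _ hLdet]
    rw [Finset.sum_congr rfl fun s _ => hterm s, ← Matrix.mul_sum, ← Matrix.sum_mul,
      hV2 n, Matrix.one_mul]
    rw [← hRR]
    simp only [Matrix.mul_assoc]
    rw [Matrix.nonsing_inv_mul_cancel_left _ _ hRdet]
    rw [Matrix.trace_mul_comm]
    simp only [Matrix.mul_assoc]
    rw [Matrix.mul_nonsing_inv _ hRdet, Matrix.mul_one]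
  have hoffd : ∀ n m : Fin N, m ≠ n → Matrix.trace (MPS.lE
      (Function.update A n (fun t => ((hl n.val n.isLt.le).posSemidef.sqrt)⁻¹ * V n t * X n *
        ((hr (n.val + 1) n.isLt).posSemidef.sqrt)⁻¹))
      (Function.update A m (fun t => ((hl m.val m.isLt.le).posSemidef.sqrt)⁻¹ * V m t * Y m *
        ((hr (m.val + 1) m.isLt).posSemidef.sqrt)⁻¹)) N le_rfl) = 0 := by
    intro n m hmn
    rcases lt_or_gt_of_ne hmn with hlt | hgt
    · have hv : m.val < n.val := hlt
      refine MPS.trace_lE_zero _ _ (m.val + 1) m.isLt ?_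
      simp only [MPS.lE, Fin.eta]
      rw [MPS.lE_eq_lMat A _ _ m.val (Nat.le_of_succ_le m.isLt)
        (fun i hi => Function.update_of_ne (Fin.ne_of_val_ne (by omega)) _ _)
        (fun i hi => Function.update_of_ne (Fin.ne_of_val_ne (by omega)) _ _)]
      simp only [Function.update_self, Function.update_of_ne hmn]
      exact hgC m
    · have hv : n.val < m.val := hgt
      refine MPS.trace_lE_zero _ _ (n.val + 1) n.isLt ?_
      simp only [MPS.lE, Fin.eta]
      rw [MPS.lE_eq_lMat A _ _ n.val (Nat.le_of_succ_le n.isLt)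
        (fun i hi => Function.update_of_ne (Fin.ne_of_val_ne (by omega)) _ _)
        (fun i hi => Function.update_of_ne (Fin.ne_of_val_ne (by omega)) _ _)]
      simp only [Function.update_self, Function.update_of_ne (Ne.symm hmn)]
      have h2 := congrArg Matrix.conjTranspose (hgB n)
      simp only [Matrix.conjTranspose_sum, Matrix.conjTranspose_mul,
        Matrix.conjTranspose_conjTranspose, Matrix.conjTranspose_zero, Matrix.mul_assoc] at h2
      rw [show (MPS.lMat A n.val n.isLt.le)ᴴ = MPS.lMat A n.val n.isLt.le from
        (hl n.val n.isLt.le).1] at h2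
      simp only [Matrix.conjTranspose_mul, Matrix.mul_assoc]
      exact h2
  simp only [MPS.phi, map_sum, Finset.sum_mul_sum]
  rw [Finset.sum_comm]
  refine Finset.sum_congr rfl fun n _ => ?_
  rw [Finset.sum_comm]
  trans (∑ m : Fin N, Matrix.trace (MPS.lE
      (Function.update A n (fun t => ((hl n.val n.isLt.le).posSemidef.sqrt)⁻¹ * V n t * X n *
        ((hr (n.val + 1) n.isLt).posSemidef.sqrt)⁻¹))
      (Function.update A m (fun t => ((hl m.val m.isLt.le).posSemidef.sqrt)⁻¹ * V m t * Y m *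
        ((hr (m.val + 1) m.isLt).posSemidef.sqrt)⁻¹)) N le_rfl))
  · exact Finset.sum_congr rfl fun m _ => MPS.overlap_eq_trace_lE _ _ h0 hN _
  · rw [Finset.sum_eq_single n (fun m _ hm => hoffd n m hm)
      (fun hc => absurd (Finset.mem_univ n) hc)]
    exact hdiag n
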